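/- For arbitrarily large n there exists an n-vertex strongly connected oriented graph D with c(D) ≥ √n / 4 whose coreset contraction Y is a directed 4-cycle, so that c(Y) = 2. -/

import Mathlib

open Classical

universe u

namespace CopsRobbers

variable {V : Type u}

/-- `CatchIn A k t c r` holds when, in the cops-and-robbers game on the digraph
with arc relation `A`, with the `k` cops currently at positions `c`, the robber
currently at `r`, and the cops to move, the cops can guarantee that some cop
occupies the robber's vertex within `t` further rounds (in each round every cop
either stays or moves along an out-arc, then the robber either stays or moves
along an out-arc; capture may occur right after the cops' move or after the
robber's move). -/
inductive CatchIn (A : V → V → Prop) (k : ℕ) : ℕ → (Fin k → V) → V → Prop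
  | caught {t : ℕ} {c : Fin k → V} {r : V} (h : ∃ i, c i = r) : CatchIn A k t c r
  | stepCatch {t : ℕ} {c : Fin k → V} {r : V} (c' : Fin k → V)
      (hc : ∀ i, c' i = c i ∨ A (c i) (c' i)) (h : ∃ i, c' i = r) :
      CatchIn A k (t + 1) c r
  | step {t : ℕ} {c : Fin k → V} {r : V} (c' : Fin k → V)
      (hc : ∀ i, c' i = c i ∨ A (c i) (c' i))
      (h : ∀ r' : V, r' = r ∨ A r r' → CatchIn A k t c' r') :
      CatchIn A k (t + 1) c r

/-- `k` cops can choose initial positions guaranteeing capture within `t` rounds,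
no matter which starting vertex the robber then chooses. -/
def CopsWinIn (A : V → V → Prop) (k t : ℕ) : Prop :=
  ∃ c : Fin k → V, ∀ r : V, CatchIn A k t c r

/-- `k` cops have a winning strategy on the digraph with arc relation `A`. -/
def CopsWin (A : V → V → Prop) (k : ℕ) : Prop := ∃ t, CopsWinIn A k t

/-- The cop number of a digraph: the least `k` such that `k` cops have a winning
strategy. -/
noncomputable def copNumber (A : V → V → Prop) : ℕ := sInf {k | CopsWin A k}

/-- The capture time of a digraph: the least `t` such that `copNumber A` cops
can guarantee capture within `t` rounds. -/
noncomputable def captureTime (A : V → V → Prop) : ℕ :=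
  sInf {t | CopsWinIn A (copNumber A) t}

/-- `A` is an orientation of the simple graph `G`: each edge of `G` is given
exactly one direction, and there are no other arcs. -/
def IsOrientation (G : SimpleGraph V) (A : V → V → Prop) : Prop :=
  (∀ u v, G.Adj u v ↔ (A u v ∨ A v u)) ∧ ∀ u v, A u v → ¬ A v u

/-- An oriented graph: a digraph with no loops and no pair of opposite arcs. -/
def IsOriented (A : V → V → Prop) : Prop := ∀ u v, A u v → ¬ A v u

/-- A digraph is strongly connected if every vertex is reachable from every
other by a directed path. -/
def StronglyConnected (A : V → V → Prop) : Prop :=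
  ∀ u v : V, Relation.ReflTransGen A u v


/-- Out-neighbourhood of a set of vertices. -/
def outN (A : V → V → Prop) (X : Set V) : Set V := {v | ∃ x ∈ X, A x v}

/-- In-neighbourhood of a set of vertices. -/
def inN (A : V → V → Prop) (Y : Set V) : Set V := {u | ∃ y ∈ Y, A u y}

/-- A coreset (coreflexive set): a minimal nonempty set `X` of vertices with
`N⁻(N⁺(X)) = X`. -/
def IsCoreset (A : V → V → Prop) (X : Set V) : Prop :=
  X.Nonempty ∧ inN A (outN A X) = X ∧
    ∀ Y : Set V, Y.Nonempty → inN A (outN A Y) = Y → Y ⊆ X → Y = X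

/-- The vertices of the coreset contraction: the coresets of `A`. -/
def Coreset (A : V → V → Prop) : Type _ := {X : Set V // IsCoreset A X}

/-- The arc relation of the coreset contraction: an arc from coreset `U` to
coreset `W` (with `U ≠ W`) when `A` has an arc from some vertex of `U` to some
vertex of `W`. -/
def coresetContraction (A : V → V → Prop) : Coreset A → Coreset A → Prop :=
  fun U W => U ≠ W ∧ ∃ u ∈ U.val, ∃ w ∈ W.val, A u w

/-! ### Auxiliary material for `stmt_11` -/

section Transfer

theorem catchIn_equiv {α β : Type*} (e : α ≃ β) {A : α → α → Prop} {B : β → β → Prop}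
    (hAB : ∀ a b, A a b ↔ B (e a) (e b)) {k t : ℕ} {c : Fin k → α} {r : α}
    (h : CatchIn A k t c r) : CatchIn B k t (fun i => e (c i)) (e r) := by
  induction h with
  | caught h =>
      exact .caught (h.imp fun i hi => congrArg e hi)
  | stepCatch c' hc h =>
      exact .stepCatch (fun i => e (c' i))
        (fun i => (hc i).imp (fun h => congrArg e h) (fun h => (hAB _ _).1 h))
        (h.imp fun i hi => congrArg e hi)
  | step c' hc h ih =>
      refine .step (fun i => e (c' i))
        (fun i => (hc i).imp (fun h => congrArg e h) (fun h => (hAB _ _).1 h)) ?_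
      intro r'' hr''
      rcases hr'' with h1 | h1
      · rw [h1]; exact ih _ (Or.inl rfl)
      · simpa using ih (e.symm r'') (Or.inr ((hAB _ _).2 (by simpa using h1)))

theorem copsWin_of_equiv {α β : Type*} (e : α ≃ β) {A : α → α → Prop} {B : β → β → Prop}
    (hAB : ∀ a b, A a b ↔ B (e a) (e b)) {k : ℕ}
    (h : CopsWin A k) : CopsWin B k := by
  obtain ⟨t, c, hc⟩ := h
  exact ⟨t, fun i => e (c i), fun r => by simpa using catchIn_equiv e hAB (hc (e.symm r))⟩

theorem copNumber_congr {α β : Type*} (e : α ≃ β) {A : α → α → Prop} {B : β → β → Prop}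
    (hAB : ∀ a b, A a b ↔ B (e a) (e b)) : copNumber A = copNumber B := by
  have h1 : ∀ k, CopsWin A k ↔ CopsWin B k := fun k =>
    ⟨copsWin_of_equiv e hAB,
     copsWin_of_equiv e.symm (fun a b => by simpa using (hAB (e.symm a) (e.symm b)).symm)⟩
  unfold copNumber
  exact congrArg sInf (Set.ext fun k => h1 k)

end Transfer

section Cycle

/-- The directed 4-cycle relation on `ZMod 4`. -/
def cyc : ZMod 4 → ZMod 4 → Prop := fun u w => w = u + 1

theorem not_catchIn_zero {α : Type*} (A : α → α → Prop) (t : ℕ) (c : Fin 0 → α) (r : α) :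
    ¬ CatchIn A 0 t c r := by
  intro h
  induction h with
  | caught h => exact h.elim fun i _ => i.elim0
  | stepCatch c' hc h => exact h.elim fun i _ => i.elim0
  | step c' hc h ih => exact ih _ (Or.inl rfl)

theorem cyc_escape_one : ∀ (t : ℕ) (c : Fin 1 → ZMod 4) (r : ZMod 4), r = c 0 + 2 →
    ¬ CatchIn cyc 1 t c r := by
  intro t
  induction t with
  | zero =>
      intro c r hr h
      cases h with
      | caught h =>
          obtain ⟨i, hi⟩ := h
          rw [Subsingleton.elim i 0, hr, left_eq_add] at hi
          exact absurd hi (by decide)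
  | succ t ih =>
      intro c r hr h
      cases h with
      | caught h =>
          obtain ⟨i, hi⟩ := h
          rw [Subsingleton.elim i 0, hr, left_eq_add] at hi
          exact absurd hi (by decide)
      | stepCatch c' hc h =>
          obtain ⟨i, hi⟩ := h
          rw [Subsingleton.elim i 0] at hi
          rcases hc 0 with he | he
          · rw [he, hr, left_eq_add] at hi; exact absurd hi (by decide)
          · have he' : c' 0 = c 0 + 1 := he
            rw [he', hr] at hi
            exact absurd (add_left_cancel hi) (by decide)
      | step c' hc h =>
          rcases hc 0 with he | he
          · exact ih c' (c' 0 + 2) rfl (h (c' 0 + 2) (Or.inl (by rw [he, hr])))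
          · have he' : c' 0 = c 0 + 1 := he
            refine ih c' (c' 0 + 2) rfl (h (c' 0 + 2) (Or.inr ?_))
            show c' 0 + 2 = r + 1
            rw [he', hr]; ring

theorem cyc_win_two : CopsWinIn cyc 2 1 := by
  refine ⟨![0, 2], fun r => ?_⟩
  have h4 := (by decide : ∀ s : ZMod 4, s = 0 ∨ s = 1 ∨ s = 2 ∨ s = 3) r
  rcases h4 with h | h | h | h
  · exact .caught ⟨0, by rw [h]; rfl⟩
  · refine .stepCatch ![1, 3] ?_ ⟨0, by rw [h]; rfl⟩
    intro i; fin_cases i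
    · exact Or.inr (show (1 : ZMod 4) = 0 + 1 by decide)
    · exact Or.inr (show (3 : ZMod 4) = 2 + 1 by decide)
  · exact .caught ⟨1, by rw [h]; rfl⟩
  · refine .stepCatch ![1, 3] ?_ ⟨1, by rw [h]; rfl⟩
    intro i; fin_cases i
    · exact Or.inr (show (1 : ZMod 4) = 0 + 1 by decide)
    · exact Or.inr (show (3 : ZMod 4) = 2 + 1 by decide)

theorem copNumber_cyc : copNumber cyc = 2 := by
  have h2 : CopsWin cyc 2 := ⟨1, cyc_win_two⟩
  have h0 : ¬ CopsWin cyc 0 := by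
    rintro ⟨t, c, h⟩; exact not_catchIn_zero cyc t c 0 (h 0)
  have h1 : ¬ CopsWin cyc 1 := by
    rintro ⟨t, c, h⟩; exact cyc_escape_one t c _ rfl (h (c 0 + 2))
  have hmem := Nat.sInf_mem (⟨2, h2⟩ : Set.Nonempty {k | CopsWin cyc k})
  unfold copNumber
  refine le_antisymm (Nat.sInf_le h2) ?_
  by_contra hlt
  push_neg at hlt
  have : sInf {k | CopsWin cyc k} = 0 ∨ sInf {k | CopsWin cyc k} = 1 := by omega
  rcases this with h | h <;> rw [h] at hmem
  · exact h0 hmem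
  · exact h1 hmem

end Cycle

section Construction

set_option linter.unusedSectionVars false

variable (q : ℕ) [Fact (Nat.Prime q)]

/-- Vertex type of the construction: four layers, each a `q × q` grid. -/
abbrev Vq : Type := ZMod 4 × ZMod q × ZMod q

/-- Arc relation: from `(i, a, b)` to `(i+1, c, a*c + b)`. -/
def Arc : Vq q → Vq q → Prop :=
  fun u v => v.1 = u.1 + 1 ∧ v.2.2 = u.2.1 * v.2.1 + u.2.2

theorem arc_oriented : IsOriented (Arc q) := by
  rintro u v ⟨h1, _⟩ ⟨h3, _⟩
  rw [h1] at h3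
  have : (0 : ZMod 4) = 1 + 1 := by
    have := h3
    nth_rewrite 1 [show u.1 = u.1 + 0 by ring] at this
    rw [add_assoc] at this
    exact add_left_cancel this
  exact absurd this (by decide)

theorem arc_mk (i : ZMod 4) (a b c : ZMod q) :
    Arc q (i, a, b) (i + 1, c, a * c + b) := ⟨rfl, rfl⟩

theorem reach3 (u : Vq q) (y : ZMod q × ZMod q) :
    Relation.ReflTransGen (Arc q) u (u.1 + 3, y) := by
  obtain ⟨i, a, b⟩ := u
  obtain ⟨g, h⟩ := y
  have h1 : Arc q (i, a, b) (i + 1, 1 - g, a * (1 - g) + b) := arc_mk q i a b (1 - g)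
  have h2 : Arc q (i + 1, 1 - g, a * (1 - g) + b)
      (i + 2, h - a * (1 - g) - b, (1 - g) * (h - a * (1 - g) - b) + (a * (1 - g) + b)) :=
    ⟨by ring, rfl⟩
  have h3 : Arc q (i + 2, h - a * (1 - g) - b,
      (1 - g) * (h - a * (1 - g) - b) + (a * (1 - g) + b)) (i + 3, g, h) :=
    ⟨by ring, by ring⟩
  exact Relation.ReflTransGen.tail
    (Relation.ReflTransGen.tail (Relation.ReflTransGen.tail .refl h1) h2) h3

theorem reach3n : ∀ (k : ℕ), 1 ≤ k → ∀ (u : Vq q) (y : ZMod q × ZMod q),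
    Relation.ReflTransGen (Arc q) u (u.1 + 3 * (k : ZMod 4), y) := by
  intro k
  induction k with
  | zero => omega
  | succ k ih =>
      intro _ u y
      by_cases hk : k = 0
      · subst hk
        simpa using reach3 q u y
      · have t1 := ih (by omega) u (0, 0)
        have t2 := reach3 q ((u.1 + 3 * (k : ZMod 4), ((0 : ZMod q), (0 : ZMod q))) : Vq q) y
        have hcast : (u.1 + 3 * (k : ZMod 4)) + 3 = u.1 + 3 * ((k + 1 : ℕ) : ZMod 4) := by
          push_cast; ring
        have t2' : Relation.ReflTransGen (Arc q)
            ((u.1 + 3 * (k : ZMod 4), ((0 : ZMod q), (0 : ZMod q))) : Vq q)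
            (u.1 + 3 * ((k + 1 : ℕ) : ZMod 4), y) := by
          simpa [hcast] using t2
        exact t1.trans t2'

theorem arc_strong : StronglyConnected (Arc q) := by
  intro u v
  have hv : v.1 = u.1 + (v.1 - u.1) := by ring
  have hex : ∃ k : ℕ, 1 ≤ k ∧ u.1 + 3 * (k : ZMod 4) = v.1 := by
    have h4 := (by decide : ∀ s : ZMod 4, s = 0 ∨ s = 1 ∨ s = 2 ∨ s = 3) (v.1 - u.1)
    rcases h4 with h | h | h | h
    · exact ⟨4, by norm_num, by rw [hv, h]; exact congrArg (u.1 + ·) (by decide)⟩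
    · exact ⟨3, by norm_num, by rw [hv, h]; exact congrArg (u.1 + ·) (by decide)⟩
    · exact ⟨2, by norm_num, by rw [hv, h]; exact congrArg (u.1 + ·) (by decide)⟩
    · exact ⟨1, by norm_num, by rw [hv, h]; exact congrArg (u.1 + ·) (by decide)⟩
  obtain ⟨k, hk1, hk⟩ := hex
  have h3 := reach3n q k hk1 u v.2
  rw [hk] at h3
  simpa using h3

theorem card_Vq : Fintype.card (Vq q) = 4 * q ^ 2 := by
  haveI : NeZero q := ⟨(Fact.out : Nat.Prime q).ne_zero⟩
  simp [ZMod.card, pow_two]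

theorem mem_of_shared {Y : Set (Vq q)} (hY : inN (Arc q) (outN (Arc q) Y) = Y)
    {u z w : Vq q} (hu : u ∈ Y) (h1 : Arc q u w) (h2 : Arc q z w) : z ∈ Y := by
  rw [← hY]; exact ⟨w, ⟨u, hu, h1⟩, h2⟩

theorem layer_connect {Y : Set (Vq q)} (hY : inN (Arc q) (outN (Arc q) Y) = Y)
    {i : ZMod 4} {a b : ZMod q} (hu : ((i, a, b) : Vq q) ∈ Y) (a' b' : ZMod q) :
    ((i, a', b') : Vq q) ∈ Y := by
  have step : ∀ a b a' b' : ZMod q, a ≠ a' → ((i, a, b) : Vq q) ∈ Y →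
      ((i, a', b') : Vq q) ∈ Y := by
    intro a b a' b' hne hmem
    have hsub : a - a' ≠ 0 := sub_ne_zero_of_ne hne
    set cc := (b' - b) * (a - a')⁻¹ with hcc
    have key : (a - a') * cc = b' - b := by
      rw [hcc, mul_comm (b' - b), ← mul_assoc, mul_inv_cancel₀ hsub, one_mul]
    have hc : a * cc + b = a' * cc + b' := by linear_combination key
    exact mem_of_shared q hY hmem (arc_mk q i a b cc) ⟨rfl, hc⟩
  by_cases haa : a = a'
  · have h1 : ((i, a + 1, b) : Vq q) ∈ Y :=
      step a b (a + 1) b (fun h => one_ne_zero (left_eq_add.mp h)) hu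
    refine step (a + 1) b a' b' ?_ h1
    intro h
    rw [← haa] at h
    exact one_ne_zero (left_eq_add.mp h.symm)
  · exact step a b a' b' haa hu

theorem layer_coreset (i : ZMod 4) : IsCoreset (Arc q) {v : Vq q | v.1 = i} := by
  refine ⟨⟨((i, 0, 0) : Vq q), rfl⟩, ?_, ?_⟩
  · ext u
    simp only [Set.mem_setOf_eq]
    constructor
    · rintro ⟨y, ⟨x, hx, hxy⟩, huy⟩
      have h1 : y.1 = x.1 + 1 := hxy.1
      have h2 : y.1 = u.1 + 1 := huy.1
      have h3 : u.1 + 1 = i + 1 := by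
        rw [← h2, h1]
        rw [hx]
      exact add_right_cancel h3
    · intro hu
      exact ⟨(u.1 + 1, 0, u.2.1 * 0 + u.2.2), ⟨u, hu, ⟨rfl, rfl⟩⟩, ⟨rfl, rfl⟩⟩
  · rintro Y ⟨⟨j, a, b⟩, hyv⟩ hfix hsub
    refine Set.Subset.antisymm hsub ?_
    have hj : j = i := hsub hyv
    subst hj
    rintro ⟨j', a', b'⟩ hv
    have hj' : j' = j := hv
    subst hj'
    exact layer_connect q hfix hyv a' b'

theorem coreset_eq_layer (X : Set (Vq q)) (hX : IsCoreset (Arc q) X) :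
    ∃ i, X = {v : Vq q | v.1 = i} := by
  obtain ⟨⟨⟨i, a, b⟩, hx⟩, hfix, hmin⟩ := hX
  refine ⟨i, ?_⟩
  have hsub : {v : Vq q | v.1 = i} ⊆ X := by
    rintro ⟨j, a', b'⟩ hv
    have hj : j = i := hv
    subst hj
    exact layer_connect q hfix hx a' b'
  exact (hmin {v : Vq q | v.1 = i} ⟨((i, 0, 0) : Vq q), rfl⟩ ((layer_coreset q i).2.1) hsub).symm

noncomputable def layerEquiv : Coreset (Arc q) ≃ ZMod 4 :=
  (Equiv.ofBijective
    (fun i : ZMod 4 => (⟨{v : Vq q | v.1 = i}, layer_coreset q i⟩ : Coreset (Arc q)))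
    ⟨by
      intro i j h
      have h1 : {v : Vq q | v.1 = i} = {v : Vq q | v.1 = j} := congrArg Subtype.val h
      have h2 : ((i, 0, 0) : Vq q) ∈ {v : Vq q | v.1 = j} := by
        rw [← h1]; exact rfl
      exact h2,
     by
      intro X
      obtain ⟨i, hi⟩ := coreset_eq_layer q X.1 X.2
      exact ⟨i, Subtype.ext hi.symm⟩⟩).symm

theorem contraction_iff (U W : Coreset (Arc q)) :
    coresetContraction (Arc q) U W ↔ layerEquiv q W = layerEquiv q U + 1 := by
  obtain ⟨i, hU⟩ := coreset_eq_layer q U.1 U.2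
  obtain ⟨j, hW⟩ := coreset_eq_layer q W.1 W.2
  have heU : layerEquiv q U = i := by
    have h : U = (layerEquiv q).symm i := Subtype.ext hU
    rw [h, Equiv.apply_symm_apply]
  have heW : layerEquiv q W = j := by
    have h : W = (layerEquiv q).symm j := Subtype.ext hW
    rw [h, Equiv.apply_symm_apply]
  rw [heU, heW]
  constructor
  · rintro ⟨hne, u, hu, w, hw, harc⟩
    have h1 : u.1 = i := by rw [hU] at hu; exact hu
    have h2 : w.1 = j := by rw [hW] at hw; exact hw
    rw [← h2, harc.1, h1]
  · intro hj
    refine ⟨?_, ((i, 0, 0) : Vq q), ?_, ((i + 1, 0, 0) : Vq q), ?_, ?_⟩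
    · intro h
      have hij : i = j := by rw [← heU, h, heW]
      have : i = i + 1 := hij.trans hj
      exact absurd (left_eq_add.mp this) (by decide)
    · rw [hU]; exact rfl
    · rw [hW]; exact hj.symm
    · exact ⟨rfl, by ring⟩

theorem copNumber_contraction : copNumber (coresetContraction (Arc q)) = 2 := by
  rw [copNumber_congr (B := cyc) (layerEquiv q) (fun U W => contraction_iff q U W)]
  exact copNumber_cyc

local instance : NeZero q := ⟨(Fact.out : Nat.Prime q).ne_zero⟩

/-- The robber's options at `r`: stay put or move along an out-arc. -/
def opts (r : Vq q) : Finset (Vq q) :=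
  insert r ((Finset.univ : Finset (ZMod q)).image
    (fun c => ((r.1 + 1, c, r.2.1 * c + r.2.2) : Vq q)))

theorem opts_spec {r v : Vq q} (h : v ∈ opts q r) : v = r ∨ Arc q r v := by
  rcases Finset.mem_insert.mp h with h | h
  · exact Or.inl h
  · obtain ⟨c, -, rfl⟩ := Finset.mem_image.mp h
    exact Or.inr ⟨rfl, rfl⟩

theorem card_opts (r : Vq q) : (opts q r).card = q + 1 := by
  have hinj : Function.Injective
      (fun c : ZMod q => ((r.1 + 1, c, r.2.1 * c + r.2.2) : Vq q)) := by
    intro c₁ c₂ h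
    exact congrArg (fun v : Vq q => v.2.1) h
  have hnot : r ∉ (Finset.univ : Finset (ZMod q)).image
      (fun c => ((r.1 + 1, c, r.2.1 * c + r.2.2) : Vq q)) := by
    intro h
    obtain ⟨c, -, hc⟩ := Finset.mem_image.mp h
    have h1 : r.1 = r.1 + 1 := congrArg Prod.fst hc.symm
    exact absurd (left_eq_add.mp h1) (by decide)
  rw [opts, Finset.card_insert_of_notMem hnot, Finset.card_image_of_injective _ hinj,
    Finset.card_univ, ZMod.card]

theorem block_card (r w : Vq q) (hw : w ≠ r) :
    ((opts q r).filter (fun v => v = w ∨ Arc q w v)).card ≤ 1 := by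
  rw [Finset.card_le_one]
  intro v₁ hv₁ v₂ hv₂
  obtain ⟨i, a, b⟩ := r
  obtain ⟨j, a', b'⟩ := w
  have classify : ∀ v : Vq q,
      v ∈ (opts q (i, a, b)).filter (fun v => v = (j, a', b') ∨ Arc q (j, a', b') v) →
      (v = ((i, a, b) : Vq q) ∧ i = j + 1) ∨
      (v = ((j, a', b') : Vq q) ∧ j = i + 1) ∨
      (∃ c : ZMod q, v = ((i + 1, c, a * c + b) : Vq q) ∧ j = i ∧
        a' * c + b' = a * c + b) := by
    intro v hv
    obtain ⟨hvO, hvB⟩ := Finset.mem_filter.mp hv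
    rcases Finset.mem_insert.mp hvO with rfl | himg
    · rcases hvB with h | h
      · exact absurd h.symm hw
      · exact Or.inl ⟨rfl, h.1⟩
    · obtain ⟨c, -, rfl⟩ := Finset.mem_image.mp himg
      rcases hvB with h | h
      · exact Or.inr (Or.inl ⟨h, (congrArg Prod.fst h).symm⟩)
      · exact Or.inr (Or.inr ⟨c, rfl, (add_right_cancel h.1).symm, h.2.symm⟩)
  have hne1 : ∀ x : ZMod 4, ¬ x = x + 1 := by decide
  have hne2 : ∀ x : ZMod 4, ¬ x = x + 1 + 1 := by decide
  rcases classify v₁ hv₁ with ⟨e1, f1⟩ | ⟨e1, f1⟩ | ⟨c₁, e1, f1, g1⟩ <;>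
    rcases classify v₂ hv₂ with ⟨e2, f2⟩ | ⟨e2, f2⟩ | ⟨c₂, e2, f2, g2⟩
  · rw [e1, e2]
  · exact absurd (f1.trans (show j + 1 = i + 1 + 1 by rw [f2])) (hne2 i)
  · exact absurd (f1.trans (show j + 1 = i + 1 by rw [f2])) (hne1 i)
  · exact absurd (f2.trans (show j + 1 = i + 1 + 1 by rw [f1])) (hne2 i)
  · rw [e1, e2]
  · exact absurd (f2.symm.trans f1) (hne1 i)
  · exact absurd (f2.trans (show j + 1 = i + 1 by rw [f1])) (hne1 i)
  · exact absurd (f1.symm.trans f2) (hne1 i)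
  · -- both are out-neighbours blocked by an arc from `w`
    by_cases haa : a' = a
    · have hb : b' = b := by
        have hg := g1
        rw [haa] at hg
        exact add_left_cancel hg
      exact absurd (show ((j, a', b') : Vq q) = ((i, a, b) : Vq q) by
        rw [f1, hb, haa]) hw
    · have hzero : (a' - a) * (c₁ - c₂) = 0 := by linear_combination g1 - g2
      have hc : c₁ - c₂ = 0 :=
        (mul_eq_zero.mp hzero).resolve_left (sub_ne_zero_of_ne haa)
      have : c₁ = c₂ := sub_eq_zero.mp hc
      rw [e1, e2, this]

theorem evade (k : ℕ) (hk : k ≤ q) (c' : Fin k → Vq q) (r : Vq q)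
    (hne : ∀ i, c' i ≠ r) :
    ∃ r', (r' = r ∨ Arc q r r') ∧ ∀ i, c' i ≠ r' ∧ ¬ Arc q (c' i) r' := by
  classical
  set Bad := (opts q r).filter (fun v => ∃ i, v = c' i ∨ Arc q (c' i) v) with hBadDef
  have hsub : Bad ⊆ Finset.univ.biUnion
      (fun i : Fin k => (opts q r).filter (fun v => v = c' i ∨ Arc q (c' i) v)) := by
    intro v hv
    obtain ⟨hvO, i, hvB⟩ := Finset.mem_filter.mp hv
    exact Finset.mem_biUnion.mpr ⟨i, Finset.mem_univ i, Finset.mem_filter.mpr ⟨hvO, hvB⟩⟩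
  have hcard : Bad.card ≤ k := by
    calc Bad.card ≤ _ := Finset.card_le_card hsub
    _ ≤ ∑ i : Fin k, ((opts q r).filter (fun v => v = c' i ∨ Arc q (c' i) v)).card :=
        Finset.card_biUnion_le
    _ ≤ ∑ _i : Fin k, 1 := Finset.sum_le_sum (fun i _ => block_card q r (c' i) (hne i))
    _ = k := by simp
  have hproper : ∃ v ∈ opts q r, v ∉ Bad := by
    by_contra hcon
    push_neg at hcon
    have hss : opts q r ⊆ Bad := fun v hv => hcon v hv
    have hle := Finset.card_le_card hss
    rw [card_opts] at hle
    omega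
  obtain ⟨v, hvO, hvB⟩ := hproper
  refine ⟨v, opts_spec q hvO, ?_⟩
  have hnotex : ¬ (∃ i, v = c' i ∨ Arc q (c' i) v) :=
    fun hex => hvB (Finset.mem_filter.mpr ⟨hvO, hex⟩)
  push_neg at hnotex
  exact fun i => ⟨Ne.symm (hnotex i).1, (hnotex i).2⟩

theorem initial_evade (k : ℕ) (hk : k ≤ q) (c : Fin k → Vq q) :
    ∃ r : Vq q, ∀ i, c i ≠ r ∧ ¬ Arc q (c i) r := by
  classical
  have hq2 : 2 ≤ q := (Fact.out : Nat.Prime q).two_le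
  set Bad := (Finset.univ : Finset (Vq q)).filter
    (fun v => ∃ i, v = c i ∨ Arc q (c i) v) with hBadDef
  have hone : ∀ w : Vq q, ((Finset.univ : Finset (Vq q)).filter
      (fun v => v = w ∨ Arc q w v)).card ≤ q + 1 := by
    intro w
    have hss : (Finset.univ : Finset (Vq q)).filter (fun v => v = w ∨ Arc q w v)
        ⊆ opts q w := by
      intro v hv
      rcases (Finset.mem_filter.mp hv).2 with h | h
      · rw [h]; exact Finset.mem_insert_self _ _
      · refine Finset.mem_insert_of_mem (Finset.mem_image.mpr
          ⟨v.2.1, Finset.mem_univ _, ?_⟩)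
        obtain ⟨h1, h2⟩ := h
        exact Prod.ext_iff.mpr ⟨h1.symm, Prod.ext_iff.mpr ⟨rfl, h2.symm⟩⟩
    calc ((Finset.univ : Finset (Vq q)).filter (fun v => v = w ∨ Arc q w v)).card
        ≤ (opts q w).card := Finset.card_le_card hss
    _ = q + 1 := card_opts q w
  have hcard : Bad.card ≤ k * (q + 1) := by
    have hsub : Bad ⊆ Finset.univ.biUnion (fun i : Fin k =>
        (Finset.univ : Finset (Vq q)).filter (fun v => v = c i ∨ Arc q (c i) v)) := by
      intro v hv
      obtain ⟨hvO, i, hvB⟩ := Finset.mem_filter.mp hv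
      exact Finset.mem_biUnion.mpr ⟨i, Finset.mem_univ i, Finset.mem_filter.mpr ⟨hvO, hvB⟩⟩
    calc Bad.card ≤ _ := Finset.card_le_card hsub
    _ ≤ ∑ i : Fin k, ((Finset.univ : Finset (Vq q)).filter
          (fun v => v = c i ∨ Arc q (c i) v)).card := Finset.card_biUnion_le
    _ ≤ ∑ _i : Fin k, (q + 1) := Finset.sum_le_sum (fun i _ => hone (c i))
    _ = k * (q + 1) := by simp [mul_comm]
  have hlt : Bad.card < Fintype.card (Vq q) := by
    rw [card_Vq]
    have h1 : k * (q + 1) ≤ q * (q + 1) := Nat.mul_le_mul_right _ hk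
    nlinarith
  obtain ⟨r, hr⟩ : ∃ r : Vq q, r ∉ Bad := by
    by_contra hcon
    push_neg at hcon
    have hss : (Finset.univ : Finset (Vq q)) ⊆ Bad := fun v _ => hcon v
    have hle := Finset.card_le_card hss
    rw [Finset.card_univ] at hle
    omega
  refine ⟨r, fun i => ?_⟩
  have hnotex : ¬ (∃ i, r = c i ∨ Arc q (c i) r) :=
    fun hex => hr (Finset.mem_filter.mpr ⟨Finset.mem_univ _, hex⟩)
  push_neg at hnotex
  exact ⟨Ne.symm (hnotex i).1, (hnotex i).2⟩

theorem escape (k : ℕ) (hk : k ≤ q) : ∀ (t : ℕ) (c : Fin k → Vq q) (r : Vq q),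
    (∀ i, c i ≠ r ∧ ¬ Arc q (c i) r) → ¬ CatchIn (Arc q) k t c r := by
  intro t
  induction t with
  | zero =>
      intro c r hinv h
      cases h with
      | caught h => obtain ⟨i, hi⟩ := h; exact (hinv i).1 hi
  | succ t ih =>
      intro c r hinv h
      cases h with
      | caught h => obtain ⟨i, hi⟩ := h; exact (hinv i).1 hi
      | stepCatch c' hc h =>
          obtain ⟨i, hi⟩ := h
          rcases hc i with he | ha
          · exact (hinv i).1 (by rw [← he]; exact hi)
          · exact (hinv i).2 (by rw [← hi]; exact ha)
      | step c' hc h =>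
          have hne : ∀ i, c' i ≠ r := by
            intro i hi
            rcases hc i with he | ha
            · exact (hinv i).1 (by rw [← he]; exact hi)
            · exact (hinv i).2 (by rw [← hi]; exact ha)
          obtain ⟨r', hr', hinv'⟩ := evade q k hk c' r hne
          exact ih c' r' hinv' (h r' hr')

theorem not_copsWin (k : ℕ) (hk : k ≤ q) : ¬ CopsWin (Arc q) k := by
  rintro ⟨t, c, hall⟩
  obtain ⟨r, hr⟩ := initial_evade q k hk c
  exact escape q k hk t c r hr (hall r)

theorem copsWin_all : CopsWin (Arc q) (Fintype.card (Vq q)) := by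
  let e := (Fintype.equivFin (Vq q)).symm
  exact ⟨0, e, fun r => .caught ⟨e.symm r, Equiv.apply_symm_apply e r⟩⟩

theorem copNumber_lb : q + 1 ≤ copNumber (Arc q) := by
  have hne : Set.Nonempty {k | CopsWin (Arc q) k} := ⟨_, copsWin_all q⟩
  have hmem := Nat.sInf_mem hne
  by_contra hcon
  push_neg at hcon
  unfold copNumber at hcon
  exact not_copsWin q _ (by omega) hmem

end Construction

/-- For arbitrarily large `n` there is an `n`-vertex strongly connected
oriented graph with cop number at least `√n / 4` whose coreset contraction is
a directed 4-cycle, hence has cop number `2`. -/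
theorem stmt_11 (N : ℕ) :
    ∃ n : ℕ, N ≤ n ∧
      ∃ (V : Type) (_ : Fintype V) (A : V → V → Prop),
        Fintype.card V = n ∧ IsOriented A ∧ StronglyConnected A ∧
        Real.sqrt n / 4 ≤ (copNumber A : ℝ) ∧
        (∃ e : Coreset A ≃ ZMod 4,
          ∀ U W : Coreset A, coresetContraction A U W ↔ e W = e U + 1) ∧
        copNumber (coresetContraction A) = 2 := by
  obtain ⟨q, hqN, hq⟩ := Nat.exists_infinite_primes N
  haveI : Fact (Nat.Prime q) := ⟨hq⟩
  refine ⟨4 * q ^ 2, ?_, Vq q, inferInstance, Arc q, card_Vq q, arc_oriented q, arc_strong q,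
    ?_, ⟨layerEquiv q, fun U W => contraction_iff q U W⟩, copNumber_contraction q⟩
  · nlinarith [hq.two_le, hqN]
  · have hcast : ((4 * q ^ 2 : ℕ) : ℝ) = ((2 * q : ℝ)) ^ 2 := by push_cast; ring
    rw [hcast, Real.sqrt_sq (by positivity)]
    have hlb := copNumber_lb q
    have hlb' : ((q : ℝ)) + 1 ≤ (copNumber (Arc q) : ℝ) := by exact_mod_cast hlb
    linarith


end CopsRobbers
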